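/- Let X : ℝ³ → ℝ³ be a smooth vector field which is conformal Killing for the Euclidean metric, i.e. (𝒟X)_{ab}(x) = 0 for all x ∈ ℝ³ and all a, b ∈ {1,2,3}, and suppose X decays at infinity, i.e. ‖X(x)‖ → 0 as ‖x‖ → ∞. Then X = 0 identically. (Equivalently: no non-trivial conformal Killing vector field on Euclidean ℝ³ decays at infinity, since the space of such fields is spanned by the translations e_i, the rotations x^i e_j − x^j e_i, the dilation Σ_i x^i e_i, and the special conformal fields 2x^j(Σ_i x^i e_i) − ‖x‖² e_j, none of which decay at infinity.) -/

import Mathlib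

open Metric Set

noncomputable section

/-- Euclidean 3-space. -/
abbrev E3 : Type := EuclideanSpace ℝ (Fin 3)

/-- Partial derivative `∂_a g` in the direction of the `a`-th coordinate vector. -/
def pd (a : Fin 3) (g : E3 → ℝ) : E3 → ℝ :=
  fun x => fderiv ℝ g x (EuclideanSpace.single a 1)

/-- The Euclidean conformal Killing operator
`(𝒟X)_{ab} = ½(∂_a X_b + ∂_b X_a) − (1/3)δ_{ab} Σ_c ∂_c X_c`. -/
def cko (X : E3 → E3) (a b : Fin 3) : E3 → ℝ := fun x =>
  (pd a (fun y => X y b) x + pd b (fun y => X y a) x) / 2 -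
    (if a = b then (1 : ℝ) else 0) / 3 * ∑ c : Fin 3, pd c (fun y => X y c) x

/-- The Euclidean vector Laplacian `(L X)_a = −Σ_b ∂_b (𝒟X)_{ab}`. -/
def vecLap (X : E3 → E3) : E3 → E3 := fun x =>
  (EuclideanSpace.equiv (Fin 3) ℝ).symm fun a => -∑ b : Fin 3, pd b (cko X a b) x

namespace CKV

def ee (a : Fin 3) : E3 := EuclideanSpace.single a 1
lemma pd_def (a : Fin 3) (g : E3 → ℝ) (x : E3) : pd a g x = fderiv ℝ g x (ee a) := rfl
lemma topp : ((⊤:ℕ∞) : WithTop ℕ∞) + 1 ≤ ((⊤:ℕ∞) : WithTop ℕ∞) := by norm_cast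
lemma onep : ((⊤:ℕ∞) : WithTop ℕ∞) ≠ 0 := by simp
lemma smooth_pd {h : E3 → ℝ} (hh : ContDiff ℝ (⊤ : ℕ∞) h) (a : Fin 3) :
    ContDiff ℝ (⊤ : ℕ∞) (pd a h) :=
  (hh.fderiv_right topp).clm_apply contDiff_const
lemma diffAt {h : E3 → ℝ} (hh : ContDiff ℝ (⊤ : ℕ∞) h) (x : E3) :
    DifferentiableAt ℝ h x := (hh.differentiable onep).differentiableAt
lemma pd_add {h1 h2 : E3 → ℝ} (hh1 : ContDiff ℝ (⊤ : ℕ∞) h1)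
    (hh2 : ContDiff ℝ (⊤ : ℕ∞) h2) (a : Fin 3) (x : E3) :
    pd a (fun y => h1 y + h2 y) x = pd a h1 x + pd a h2 x := by
  simp only [pd_def, fderiv_fun_add (diffAt hh1 x) (diffAt hh2 x)]; rfl
lemma pd_const_mul {h : E3 → ℝ} (hh : ContDiff ℝ (⊤ : ℕ∞) h) (r : ℝ) (a : Fin 3) (x : E3) :
    pd a (fun y => r * h y) x = r * pd a h x := by
  simp only [pd_def, fderiv_const_mul (diffAt hh x)]; rfl
lemma pd_pd {h : E3 → ℝ} (hh : ContDiff ℝ (⊤ : ℕ∞) h) (i j : Fin 3) (x : E3) :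
    pd i (pd j h) x = fderiv ℝ (fderiv ℝ h) x (ee i) (ee j) := by
  have hdf : DifferentiableAt ℝ (fderiv ℝ h) x :=
    ((hh.fderiv_right topp).differentiable onep).differentiableAt
  have hc : HasFDerivAt (fun y => fderiv ℝ h y (ee j))
      ((ContinuousLinearMap.apply ℝ ℝ (ee j)).comp (fderiv ℝ (fderiv ℝ h) x)) x :=
    (ContinuousLinearMap.apply ℝ ℝ (ee j)).hasFDerivAt.comp x hdf.hasFDerivAt
  have hpd : pd j h = fun y => fderiv ℝ h y (ee j) := rfl
  simp only [pd_def, hpd]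
  rw [hc.fderiv]; rfl
lemma pd_comm {h : E3 → ℝ} (hh : ContDiff ℝ (⊤ : ℕ∞) h) (i j : Fin 3) (x : E3) :
    pd i (pd j h) x = pd j (pd i h) x := by
  rw [pd_pd hh, pd_pd hh]
  exact second_derivative_symmetric (fun y => (diffAt hh y).hasFDerivAt)
    (((hh.fderiv_right topp).differentiable onep) x).hasFDerivAt (ee i) (ee j)
lemma sum_single (v : E3) : ∑ i : Fin 3, v i • ee i = v := by
  ext j; rw [WithLp.ofLp_sum, Finset.sum_apply]; simp [ee, EuclideanSpace.single_apply]
lemma clm_apply_eq_sum (L : E3 →L[ℝ] ℝ) (v : E3) : L v = ∑ i : Fin 3, v i * L (ee i) := by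
  conv_lhs => rw [← sum_single v]
  rw [map_sum]; simp [smul_eq_mul]
lemma fderiv_apply_eq_sum {h : E3 → ℝ} (x v : E3) :
    fderiv ℝ h x v = ∑ i : Fin 3, v i * pd i h x := clm_apply_eq_sum _ v

/-- components -/
def gg (X : E3 → E3) (b : Fin 3) : E3 → ℝ := fun y => X y b
/-- (2/3) times divergence -/
def ff (X : E3 → E3) : E3 → ℝ := fun y => 2 / 3 * ∑ c : Fin 3, pd c (gg X c) y

variable {X : E3 → E3}

lemma smooth_gg (hX : ContDiff ℝ (⊤ : ℕ∞) X) (b : Fin 3) : ContDiff ℝ (⊤ : ℕ∞) (gg X b) :=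
  ((EuclideanSpace.proj b).contDiff.comp hX : ContDiff ℝ (⊤ : ℕ∞) (⇑(EuclideanSpace.proj (𝕜 := ℝ) b) ∘ X))

lemma smooth_ff (hX : ContDiff ℝ (⊤ : ℕ∞) X) : ContDiff ℝ (⊤ : ℕ∞) (ff X) :=
  contDiff_const.mul (ContDiff.sum fun c _ => smooth_pd (smooth_gg hX c) c)

lemma hE (hck : ∀ x : E3, ∀ a b : Fin 3, cko X a b x = 0) (a b : Fin 3) (x : E3) :
    pd a (gg X b) x + pd b (gg X a) x = (if a = b then ff X x else 0) := by
  have hrw : ∀ c : Fin 3, (fun y : E3 => X y c) = gg X c := fun _ => rfl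
  have h := hck x a b
  simp only [cko, hrw] at h
  by_cases hab : a = b <;> simp only [hab, if_true, if_false, ite_true, ite_false, ff] at h ⊢ <;>
    simp [hab] at h ⊢ <;> linarith

lemma hD (hX : ContDiff ℝ (⊤ : ℕ∞) X) (hck : ∀ x : E3, ∀ a b : Fin 3, cko X a b x = 0)
    (a b c : Fin 3) (x : E3) :
    pd c (pd a (gg X b)) x + pd c (pd b (gg X a)) x = (if a = b then pd c (ff X) x else 0) := by
  have hfun : (fun y => pd a (gg X b) y + pd b (gg X a) y) =
      (fun y => if a = b then ff X y else 0) := funext fun y => hE hck a b y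
  have h2 := congrArg (fun F : E3 → ℝ => pd c F x) hfun
  rw [pd_add (smooth_pd (smooth_gg hX b) a) (smooth_pd (smooth_gg hX a) b)] at h2
  rw [h2]
  by_cases hab : a = b
  · simp only [hab, if_true, ite_true]
  · simp only [hab, if_false, ite_false]
    simp [pd]

lemma star (hX : ContDiff ℝ (⊤ : ℕ∞) X) (hck : ∀ x : E3, ∀ a b : Fin 3, cko X a b x = 0)
    (a b c : Fin 3) (x : E3) :
    2 * pd c (pd a (gg X b)) x = (if a = b then pd c (ff X) x else 0) +
      (if b = c then pd a (ff X) x else 0) - (if c = a then pd b (ff X) x else 0) := by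
  have h1 := hD hX hck a b c x
  have h2 := hD hX hck b c a x
  have h3 := hD hX hck c a b x
  rw [pd_comm (smooth_gg hX a) c b] at h1
  rw [pd_comm (smooth_gg hX b) a c, pd_comm (smooth_gg hX c) a b] at h2
  linarith

lemma hQ (hX : ContDiff ℝ (⊤ : ℕ∞) X) (hck : ∀ x : E3, ∀ a b : Fin 3, cko X a b x = 0)
    (a b c d : Fin 3) (x : E3) :
    2 * pd d (pd c (pd a (gg X b))) x =
      (if a = b then pd d (pd c (ff X)) x else 0) +
      (if b = c then pd d (pd a (ff X)) x else 0) -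
      (if c = a then pd d (pd b (ff X)) x else 0) := by
  have hfun : (fun y => 2 * pd c (pd a (gg X b)) y) =
      (fun y => (if a = b then (1:ℝ) else 0) * pd c (ff X) y +
        ((if b = c then (1:ℝ) else 0) * pd a (ff X) y +
          -((if c = a then (1:ℝ) else 0) * pd b (ff X) y))) := by
    funext y
    rw [star hX hck a b c y]
    split_ifs <;> ring
  have h2 := congrArg (fun F : E3 → ℝ => pd d F x) hfun
  have sPc : ContDiff ℝ (⊤ : ℕ∞) (pd c (pd a (gg X b))) :=
    smooth_pd (smooth_pd (smooth_gg hX b) a) c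
  have sfc : ∀ i : Fin 3, ContDiff ℝ (⊤ : ℕ∞)
      (fun y => (if i = i then (1:ℝ) else 0) * pd i (ff X) y) := fun i => by
    exact contDiff_const.mul (smooth_pd (smooth_ff hX) i)
  have sc : ∀ (r : ℝ) (i : Fin 3), ContDiff ℝ (⊤ : ℕ∞) (fun y => r * pd i (ff X) y) :=
    fun r i => contDiff_const.mul (smooth_pd (smooth_ff hX) i)
  rw [pd_const_mul sPc 2 d x] at h2
  rw [pd_add (sc _ c) (((sc _ a)).add (((sc _ b)).neg)) d x] at h2
  rw [pd_add (sc _ a) ((sc _ b)).neg d x] at h2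
  have hneg : pd d (fun y => -((if c = a then (1:ℝ) else 0) * pd b (ff X) y)) x =
      -((if c = a then (1:ℝ) else 0) * pd d (pd b (ff X)) x) := by
    have : (fun y => -((if c = a then (1:ℝ) else 0) * pd b (ff X) y)) =
        (fun y => (-(if c = a then (1:ℝ) else 0)) * pd b (ff X) y) := by funext y; ring
    rw [this, pd_const_mul (smooth_pd (smooth_ff hX) b)]
    ring
  rw [hneg] at h2
  rw [pd_const_mul (smooth_pd (smooth_ff hX) c) _ d x,
    pd_const_mul (smooth_pd (smooth_ff hX) a) _ d x] at h2
  rw [h2]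
  split_ifs <;> ring

lemma hH (hX : ContDiff ℝ (⊤ : ℕ∞) X) (hck : ∀ x : E3, ∀ a b : Fin 3, cko X a b x = 0)
    (i j : Fin 3) (x : E3) : pd i (pd j (ff X)) x = 0 := by
  have key : ∀ d c a b : Fin 3,
      (if a = b then pd d (pd c (ff X)) x else 0) +
      (if b = c then pd d (pd a (ff X)) x else 0) -
      (if c = a then pd d (pd b (ff X)) x else 0) =
      (if a = b then pd c (pd d (ff X)) x else 0) +
      (if b = d then pd c (pd a (ff X)) x else 0) -
      (if d = a then pd c (pd b (ff X)) x else 0) := by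
    intro d c a b
    have h1 := hQ hX hck a b c d x
    have h2 := hQ hX hck a b d c x
    rw [pd_comm (smooth_pd (smooth_gg hX b) a) d c x] at h1
    rw [← h1, ← h2]
  have fact : ∀ d a c : Fin 3, c ≠ a → c ≠ d →
      pd d (pd a (ff X)) x = if d = a then -(pd c (pd c (ff X)) x) else 0 := by
    intro d a c h1 h2
    have k := key d c a c
    have hac : ¬(a = c) := fun h => h1 h.symm
    have hcd : ¬(c = d) := h2
    have hca : ¬(c = a) := h1
    rw [if_neg hac, if_pos rfl, if_neg hca, if_neg hac, if_neg hcd] at k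
    by_cases hda : d = a
    · rw [if_pos hda] at k ⊢
      linarith
    · rw [if_neg hda] at k ⊢
      linarith
  have f01 : pd (0 : Fin 3) (pd 1 (ff X)) x = 0 := by
    simpa using fact 0 1 2 (by decide) (by decide)
  have f02 : pd (0 : Fin 3) (pd 2 (ff X)) x = 0 := by
    simpa using fact 0 2 1 (by decide) (by decide)
  have f12 : pd (1 : Fin 3) (pd 2 (ff X)) x = 0 := by
    simpa using fact 1 2 0 (by decide) (by decide)
  have f10 : pd (1 : Fin 3) (pd 0 (ff X)) x = 0 := by
    simpa using fact 1 0 2 (by decide) (by decide)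
  have f20 : pd (2 : Fin 3) (pd 0 (ff X)) x = 0 := by
    simpa using fact 2 0 1 (by decide) (by decide)
  have f21 : pd (2 : Fin 3) (pd 1 (ff X)) x = 0 := by
    simpa using fact 2 1 0 (by decide) (by decide)
  have d01 : pd (0 : Fin 3) (pd 0 (ff X)) x = -(pd (1 : Fin 3) (pd 1 (ff X)) x) := by
    simpa using fact 0 0 1 (by decide) (by decide)
  have d02 : pd (0 : Fin 3) (pd 0 (ff X)) x = -(pd (2 : Fin 3) (pd 2 (ff X)) x) := by
    simpa using fact 0 0 2 (by decide) (by decide)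
  have d12 : pd (1 : Fin 3) (pd 1 (ff X)) x = -(pd (2 : Fin 3) (pd 2 (ff X)) x) := by
    simpa using fact 1 1 2 (by decide) (by decide)
  have h00 : pd (0 : Fin 3) (pd 0 (ff X)) x = 0 := by linarith
  have h11 : pd (1 : Fin 3) (pd 1 (ff X)) x = 0 := by linarith
  have h22 : pd (2 : Fin 3) (pd 2 (ff X)) x = 0 := by linarith
  fin_cases i <;> fin_cases j <;> assumption

lemma hconst (hX : ContDiff ℝ (⊤ : ℕ∞) X) (hck : ∀ x : E3, ∀ a b : Fin 3, cko X a b x = 0)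
    (a c b : Fin 3) (x : E3) :
    pd c (pd a (gg X b)) x = pd c (pd a (gg X b)) 0 := by
  have hq : ContDiff ℝ (⊤ : ℕ∞) (pd c (pd a (gg X b))) :=
    smooth_pd (smooth_pd (smooth_gg hX b) a) c
  have hz : ∀ (y : E3) (d : Fin 3), pd d (pd c (pd a (gg X b))) y = 0 := by
    intro y d
    have h := hQ hX hck a b c d y
    simp only [hH hX hck] at h
    simp at h
    linarith
  have hfz : ∀ y : E3, fderiv ℝ (pd c (pd a (gg X b))) y = 0 := by
    intro y
    apply ContinuousLinearMap.ext
    intro v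
    rw [ContinuousLinearMap.zero_apply, fderiv_apply_eq_sum]
    simp [hz]
  exact is_const_of_fderiv_eq_zero (hq.differentiable onep) hfz x 0
lemma poly2 {φ ψ : ℝ → ℝ} {C : ℝ} (hφ : ∀ t, HasDerivAt φ (ψ t) t)
    (hψ : ∀ t, HasDerivAt ψ C t)
    (hlim : Filter.Tendsto φ Filter.atTop (nhds 0)) : ∀ t, φ t = 0 := by
  -- ψ is affine
  have hψlin : ∀ t, ψ t = ψ 0 + C * t := by
    have hu : ∀ t : ℝ, HasDerivAt (fun s => ψ s - C * s) 0 t := by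
      intro t
      simpa using (hψ t).fun_sub ((hasDerivAt_id t).const_mul C)
    have hconst := is_const_of_deriv_eq_zero (fun t => (hu t).differentiableAt)
      (fun t => (hu t).deriv)
    intro t
    have := hconst t 0
    simp at this
    linarith
  -- φ is quadratic
  have hform : ∀ t, φ t = φ 0 + ψ 0 * t + C * t ^ 2 / 2 := by
    have hw : ∀ t : ℝ, HasDerivAt (fun s => φ s - (ψ 0 * s + C * s ^ 2 / 2)) 0 t := by
      intro t
      have h2 : HasDerivAt (fun s : ℝ => ψ 0 * s + C * s ^ 2 / 2) (ψ 0 + C * t) t := by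
        have ha : HasDerivAt (fun s : ℝ => ψ 0 * s) (ψ 0) t := by
          simpa using (hasDerivAt_id t).const_mul (ψ 0)
        have hb : HasDerivAt (fun s : ℝ => C * s ^ 2 / 2) (C * t) t := by
          have : HasDerivAt (fun s : ℝ => s ^ 2) (2 * t) t := by
            simpa using hasDerivAt_pow 2 t
          have := (this.const_mul C).div_const 2
          rw [show C * t = C * (2 * t) / 2 by ring]
          exact this
        exact ha.add hb
      have := (hφ t).fun_sub h2
      rw [hψlin t] at this
      simpa using this
    have hconst := is_const_of_deriv_eq_zero (fun t => (hw t).differentiableAt)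
      (fun t => (hw t).deriv)
    intro t
    have := hconst t 0
    simp at this
    linarith
  -- extract coefficients from decay
  set a := φ 0
  set b := ψ 0
  have htop : Filter.Tendsto (fun t : ℝ => t) Filter.atTop Filter.atTop := Filter.tendsto_id
  have hC : C = 0 := by
    have h1 : Filter.Tendsto (fun t : ℝ => φ t / t ^ 2) Filter.atTop (nhds 0) :=
      hlim.div_atTop (Filter.tendsto_pow_atTop two_ne_zero)
    have h2 : Filter.Tendsto (fun t : ℝ => a / t ^ 2 + b / t + C / 2) Filter.atTop
        (nhds (C / 2)) := by
      have ha : Filter.Tendsto (fun t : ℝ => a / t ^ 2) Filter.atTop (nhds 0) :=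
        tendsto_const_nhds.div_atTop (Filter.tendsto_pow_atTop two_ne_zero)
      have hb : Filter.Tendsto (fun t : ℝ => b / t) Filter.atTop (nhds 0) :=
        tendsto_const_nhds.div_atTop htop
      have := (ha.add hb).add (tendsto_const_nhds (x := C / 2))
      simpa using this
    have heq : ∀ᶠ t : ℝ in Filter.atTop, φ t / t ^ 2 = a / t ^ 2 + b / t + C / 2 := by
      filter_upwards [Filter.eventually_ge_atTop (1 : ℝ)] with t ht
      have ht0 : t ≠ 0 := by linarith
      rw [hform t]
      field_simp
    have := tendsto_nhds_unique (h1.congr' heq) h2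
    linarith
  have hb : b = 0 := by
    have h1 : Filter.Tendsto (fun t : ℝ => φ t / t) Filter.atTop (nhds 0) :=
      hlim.div_atTop htop
    have h2 : Filter.Tendsto (fun t : ℝ => a / t + b) Filter.atTop (nhds b) := by
      have ha : Filter.Tendsto (fun t : ℝ => a / t) Filter.atTop (nhds 0) :=
        tendsto_const_nhds.div_atTop htop
      simpa using ha.add (tendsto_const_nhds (x := b))
    have heq : ∀ᶠ t : ℝ in Filter.atTop, φ t / t = a / t + b := by
      filter_upwards [Filter.eventually_ge_atTop (1 : ℝ)] with t ht
      have ht0 : t ≠ 0 := by linarith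
      rw [hform t, hC]
      field_simp
      ring
    exact (tendsto_nhds_unique (h1.congr' heq) h2).symm
  have ha : a = 0 := by
    have h2 : Filter.Tendsto φ Filter.atTop (nhds a) := by
      have : φ = fun _ => a := by
        funext t; rw [hform t, hC, hb]; ring
      rw [this]
      exact tendsto_const_nhds
    exact (tendsto_nhds_unique hlim h2).symm
  intro t
  rw [hform t, hC, hb, ha]
  ring

lemma abs_coord_le (y : E3) (b : Fin 3) : |y b| ≤ ‖y‖ := by
  have h := abs_real_inner_le_norm (EuclideanSpace.single b (1 : ℝ) : E3) y
  simpa [EuclideanSpace.inner_single_left] using h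



lemma ee_ne_zero (a : Fin 3) : ee a ≠ 0 := by
  intro h
  have h1 : ‖ee a‖ = 1 := by simp [ee, EuclideanSpace.norm_single]
  rw [h] at h1
  simp at h1

end CKV

open CKV in
/-- a conformal Killing vector field on Euclidean `ℝ³` which decays
at infinity vanishes identically. -/
theorem conformal_killing_decay_eq_zero (X : E3 → E3) (hX : ContDiff ℝ (⊤ : ℕ∞) X)
    (hck : ∀ x : E3, ∀ a b : Fin 3, cko X a b x = 0)
    (hdecay : ∀ ε : ℝ, 0 < ε → ∃ R : ℝ, ∀ x : E3, R < ‖x‖ → ‖X x‖ < ε) :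
    ∀ x : E3, X x = 0 := by
  classical
  have key : ∀ v : E3, v ≠ 0 → ∀ b : Fin 3, ∀ t : ℝ, X (t • v) b = 0 := by
    intro v hv b
    have hline : ∀ t : ℝ, HasDerivAt (fun s : ℝ => s • v) v t := by
      intro t
      simpa using (hasDerivAt_id t).smul_const v
    have hφ : ∀ t : ℝ, HasDerivAt (fun t : ℝ => gg X b (t • v))
        (∑ a : Fin 3, v a * pd a (gg X b) (t • v)) t := by
      intro t
      have h1 := (diffAt (smooth_gg hX b) (t • v)).hasFDerivAt.comp_hasDerivAt t (hline t)
      rw [fderiv_apply_eq_sum] at h1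
      exact h1
    have hψ : ∀ t : ℝ, HasDerivAt (fun t : ℝ => ∑ a : Fin 3, v a * pd a (gg X b) (t • v))
        (∑ a : Fin 3, v a * ∑ c : Fin 3, v c * pd c (pd a (gg X b)) 0) t := by
      intro t
      refine HasDerivAt.fun_sum fun a _ => ?_
      refine HasDerivAt.const_mul (v a) ?_
      have h1 := (diffAt (smooth_pd (smooth_gg hX b) a) (t • v)).hasFDerivAt.comp_hasDerivAt
        t (hline t)
      rw [fderiv_apply_eq_sum] at h1
      have h2 : ∑ c : Fin 3, v c * pd c (pd a (gg X b)) (t • v) =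
          ∑ c : Fin 3, v c * pd c (pd a (gg X b)) 0 :=
        Finset.sum_congr rfl fun c _ => by rw [hconst hX hck a c b (t • v)]
      rw [h2] at h1
      exact h1
    have hnv : 0 < ‖v‖ := norm_pos_iff.mpr hv
    have hlim : Filter.Tendsto (fun t : ℝ => gg X b (t • v)) Filter.atTop (nhds 0) := by
      rw [Metric.tendsto_atTop]
      intro ε hε
      obtain ⟨R, hR⟩ := hdecay ε hε
      refine ⟨max 0 (R / ‖v‖) + 1, fun t ht => ?_⟩
      have ht0 : 0 < t := lt_of_lt_of_le (by positivity) ht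
      have hRt : R < ‖t • v‖ := by
        rw [norm_smul, Real.norm_eq_abs, abs_of_pos ht0]
        have h' : R / ‖v‖ < t := lt_of_le_of_lt (le_max_right 0 _) (by linarith)
        exact (div_lt_iff₀ hnv).mp h'
      have hbig := hR (t • v) hRt
      rw [Real.dist_eq, sub_zero]
      exact lt_of_le_of_lt (abs_coord_le (X (t • v)) b) hbig
    have hzero := poly2 hφ hψ hlim
    intro t
    exact hzero t
  intro x
  ext b
  by_cases hx : x = 0
  · subst hx
    have h := key (ee 0) (ee_ne_zero 0) b 0
    simpa using h
  · have h := key x hx b 1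
    simpa using h
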